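/- Let J* be the joint distribution of (p(x), y*) for a predictor p : X → [0,1] over a finite set X and distribution D* on X × {0,1}. Then the upper and lower distances to calibration satisfy dCE_upper(J*) ≤ 4·sqrt(dCE_lower(J*)); that is, for every realization (X', D', p') of J*, dCE(p', D') ≤ 4·sqrt(dCE_lower(J*)). -/

import Mathlib

open scoped Classical
open Finset Set

noncomputable section

/-- `D` is a probability distribution on `X × {0,1}` (labels as `Bool`). -/
def IsDistribution {X : Type} [Fintype X] (D : X × Bool → ℝ) : Prop :=
  (∀ z, 0 ≤ D z) ∧ (∑ z : X × Bool, D z) = 1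

/-- A predictor takes values in `[0,1]`. -/
def IsPredictor {X : Type} (p : X → ℝ) : Prop := ∀ x, p x ∈ Set.Icc (0 : ℝ) 1

/-- Numerical value of a Boolean label. -/
def yval (y : Bool) : ℝ := if y then 1 else 0

/-- Marginal mass of a point `x`. -/
def massx {X : Type} (D : X × Bool → ℝ) (x : X) : ℝ := D (x, false) + D (x, true)

/-- Expectation of `f(x, y)` under `D`. -/
def expval {X : Type} [Fintype X] (D : X × Bool → ℝ) (f : X × Bool → ℝ) : ℝ :=
  ∑ z : X × Bool, D z * f z

/-- Perfect calibration: for every `v` in the image of `p`,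
`E[y | p(x) = v] = v`, stated multiplicatively. -/
def PerfectlyCalibrated {X : Type} [Fintype X] (D : X × Bool → ℝ) (p : X → ℝ) : Prop :=
  ∀ v ∈ Set.range p,
    (∑ x : X, if p x = v then D (x, true) else 0) =
      v * (∑ x : X, if p x = v then massx D x else 0)

/-- The expected `ℓ1` distance `d(p1, p2) = E|p1(x) - p2(x)|` between predictors. -/
def distp {X : Type} [Fintype X] (D : X × Bool → ℝ) (p1 p2 : X → ℝ) : ℝ :=
  ∑ x : X, massx D x * |p1 x - p2 x|

/-- The distance to calibration: the minimal expected `ℓ1` distance from `p` to a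
perfectly calibrated predictor (on the same space, with values in `[0,1]`). -/
def dCE {X : Type} [Fintype X] (D : X × Bool → ℝ) (p : X → ℝ) : ℝ :=
  sInf {c : ℝ | ∃ q : X → ℝ, IsPredictor q ∧ PerfectlyCalibrated D q ∧ c = distp D p q}

/-- The joint distribution of `(p(x), y)`, as a density on `ℝ × Bool`. -/
def jointOf {X : Type} [Fintype X] (D : X × Bool → ℝ) (p : X → ℝ) : ℝ × Bool → ℝ :=
  fun w => ∑ x : X, if p x = w.1 then D (x, w.2) else 0

/-- A realization of a joint prediction-label distribution `J` on `[0,1] × {0,1}`: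
a (finite) set `carrier`, a distribution `D'` on `carrier × Bool`, and a predictor
`p'` whose joint prediction-label distribution is `J`. -/
structure Realization (J : ℝ × Bool → ℝ) where
  carrier : Type
  [inst : Fintype carrier]
  D' : carrier × Bool → ℝ
  p' : carrier → ℝ
  hD' : IsDistribution D'
  hp' : IsPredictor p'
  hJ : jointOf D' p' = J

/-- The distance to calibration of a realization. -/
def Realization.dce {J : ℝ × Bool → ℝ} (R : Realization J) : ℝ :=
  @dCE R.carrier R.inst R.D' R.p'
section AuxBasic

variable {X : Type} [Fintype X]

lemma massx_nonneg {D : X × Bool → ℝ} (hD : IsDistribution D) (x : X) : 0 ≤ massx D x :=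
  add_nonneg (hD.1 _) (hD.1 _)

lemma sum_massx_eq_one {D : X × Bool → ℝ} (hD : IsDistribution D) :
    ∑ x : X, massx D x = 1 := by
  have := hD.2
  rw [Fintype.sum_prod_type] at this
  simpa [massx, Fintype.sum_bool, add_comm] using this

/-- Sums over `X × Bool` split. -/
lemma sum_prod_bool (f : X × Bool → ℝ) :
    ∑ z : X × Bool, f z = ∑ x : X, (f (x, false) + f (x, true)) := by
  rw [Fintype.sum_prod_type]
  simp [Fintype.sum_bool, add_comm]

end AuxBasic
section Bucket

variable {X : Type} [Fintype X]

/-- Mass of label-1 within bucket `k`. -/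
def bnumT (D : X × Bool → ℝ) (p : X → ℝ) (g : ℝ → ℤ) (k : ℤ) : ℝ :=
  ∑ x : X, if g (p x) = k then D (x, true) else 0

/-- Total mass of bucket `k`. -/
def bden (D : X × Bool → ℝ) (p : X → ℝ) (g : ℝ → ℤ) (k : ℤ) : ℝ :=
  ∑ x : X, if g (p x) = k then massx D x else 0

/-- Mass-weighted sum of `p` within bucket `k`. -/
def bnumP (D : X × Bool → ℝ) (p : X → ℝ) (g : ℝ → ℤ) (k : ℤ) : ℝ :=
  ∑ x : X, if g (p x) = k then massx D x * p x else 0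

/-- The bucketed (conditional expectation) predictor. -/
def bq (D : X × Bool → ℝ) (p : X → ℝ) (g : ℝ → ℤ) : X → ℝ :=
  fun x => bnumT D p g (g (p x)) / bden D p g (g (p x))

variable {D : X × Bool → ℝ} {p : X → ℝ} {g : ℝ → ℤ}

lemma bnumT_nonneg (hD : IsDistribution D) (k : ℤ) : 0 ≤ bnumT D p g k :=
  Finset.sum_nonneg fun x _ => by by_cases h : g (p x) = k <;> simp [h, hD.1 (x, true)]

lemma bden_nonneg (hD : IsDistribution D) (k : ℤ) : 0 ≤ bden D p g k :=
  Finset.sum_nonneg fun x _ => by by_cases h : g (p x) = k <;> simp [h, massx_nonneg hD x]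

lemma bnumT_le_bden (hD : IsDistribution D) (k : ℤ) : bnumT D p g k ≤ bden D p g k :=
  Finset.sum_le_sum fun x _ => by
    by_cases h : g (p x) = k <;> simp [h, massx, hD.1 (x, false), le_add_of_nonneg_left]

lemma bden_eq_zero_imp (hD : IsDistribution D) {k : ℤ} (h : bden D p g k = 0)
    {x : X} (hx : g (p x) = k) : massx D x = 0 := by
  have h0 : ∀ x ∈ Finset.univ (α := X), 0 ≤ (if g (p x) = k then massx D x else 0) :=
    fun x _ => by by_cases h : g (p x) = k <;> simp [h, massx_nonneg hD x]
  have := (Finset.sum_eq_zero_iff_of_nonneg h0).1 h x (Finset.mem_univ x)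
  simpa [hx] using this

lemma bq_predictor (hD : IsDistribution D) : IsPredictor (bq D p g) := by
  intro x
  constructor
  · exact div_nonneg (bnumT_nonneg hD _) (bden_nonneg hD _)
  · rcases eq_or_lt_of_le (bden_nonneg (p := p) (g := g) hD (g (p x))) with h | h
    · simp [bq, ← h]
    · exact div_le_one_of_le₀ (bnumT_le_bden hD _) (le_of_lt h)

lemma bnumT_eq_mul_bden (hD : IsDistribution D) (k : ℤ) :
    bnumT D p g k = (bnumT D p g k / bden D p g k) * bden D p g k := by
  rcases eq_or_lt_of_le (bden_nonneg hD (k := k) (g := g) (p := p)) with h | h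
  · have h2 := bnumT_le_bden (p := p) (g := g) hD k
    have h3 := bnumT_nonneg (p := p) (g := g) hD k
    rw [← h]; nlinarith
  · field_simp

lemma bq_calibrated (hD : IsDistribution D) : PerfectlyCalibrated D (bq D p g) := by
  intro v hv
  classical
  set m : ℤ → ℝ := fun k => bnumT D p g k / bden D p g k with hm
  have hgrp : ∀ f : X → ℝ,
      (∑ x : X, if bq D p g x = v then f x else 0)
        = ∑ k ∈ Finset.image (fun x => g (p x)) Finset.univ,
            (if m k = v then (∑ x : X, if g (p x) = k then f x else 0) else 0) := by
    intro f
    rw [← Finset.sum_fiberwise_of_maps_to (g := fun x => g (p x))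
      (fun x _ => Finset.mem_image_of_mem (fun x => g (p x)) (Finset.mem_univ x))]
    refine Finset.sum_congr rfl fun k _ => ?_
    rw [Finset.sum_filter]
    by_cases hmk : m k = v
    · simp only [hmk, if_true]
      refine Finset.sum_congr rfl fun x _ => ?_
      by_cases hx : g (p x) = k
      · have hb : bq D p g x = v := by rw [show bq D p g x = m k by simp [bq, hx, hm]]; exact hmk
        simp [hb, hx]
      · simp [hx]
    · simp only [hmk, if_false]
      refine (Finset.sum_eq_zero fun x hxu => ?_)
      by_cases hx : g (p x) = k
      · have hb : bq D p g x = m k := by simp [bq, hx, hm]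
        simp [hb, hmk]
      · simp [hx]
  rw [hgrp (fun x => D (x, true)), hgrp (fun x => massx D x), Finset.mul_sum]
  refine Finset.sum_congr rfl fun k _ => ?_
  by_cases hmk : m k = v
  · simp only [hmk, if_true]
    have := bnumT_eq_mul_bden (p := p) (g := g) hD k
    rw [show (∑ x : X, if g (p x) = k then D (x, true) else 0) = bnumT D p g k from rfl,
      show (∑ x : X, if g (p x) = k then massx D x else 0) = bden D p g k from rfl,
      this, ← hmk]
  · simp [hmk]

end Bucket
section DistBound

variable {X : Type} [Fintype X] {D : X × Bool → ℝ} {p : X → ℝ} {g : ℝ → ℤ} {δ : ℝ}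

lemma bden_filter (k : ℤ) :
    bden D p g k = ∑ x ∈ Finset.univ.filter (fun x => g (p x) = k), massx D x := by
  rw [Finset.sum_filter]; rfl

lemma bnumP_filter (k : ℤ) :
    bnumP D p g k = ∑ x ∈ Finset.univ.filter (fun x => g (p x) = k), massx D x * p x := by
  rw [Finset.sum_filter]; rfl

lemma bucket_dist_bound (hD : IsDistribution D) (hδ : 0 ≤ δ)
    (hg : ∀ t u : ℝ, g t = g u → |t - u| ≤ δ) (k : ℤ) :
    ∑ x ∈ Finset.univ.filter (fun x => g (p x) = k),
        massx D x * |p x - bnumT D p g k / bden D p g k|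
      ≤ δ * bden D p g k + |bnumP D p g k - bnumT D p g k| := by
  classical
  set F := Finset.univ.filter (fun x : X => g (p x) = k) with hF
  rcases eq_or_lt_of_le (bden_nonneg (p := p) (g := g) hD k) with hd | hd
  · have : ∀ x ∈ F, massx D x * |p x - bnumT D p g k / bden D p g k| = 0 := by
      intro x hx
      have := bden_eq_zero_imp hD hd.symm (Finset.mem_filter.1 hx).2
      simp [this]
    rw [Finset.sum_eq_zero this]
    positivity
  · set d := bden D p g k with hdd
    set nP := bnumP D p g k with hnP
    set nT := bnumT D p g k with hnT
    have hsumF : ∑ x ∈ F, massx D x = d := (bden_filter k).symm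
    have hsumP : ∑ x ∈ F, massx D x * p x = nP := (bnumP_filter k).symm
    have step1 : ∀ x ∈ F, massx D x * |p x - nP / d| ≤ massx D x * δ := by
      intro x hx
      have hxk : g (p x) = k := (Finset.mem_filter.1 hx).2
      have key : |d * p x - nP| ≤ δ * d := by
        have expand : d * p x - nP = ∑ x' ∈ F, massx D x' * (p x - p x') := by
          simp only [mul_sub]
          rw [Finset.sum_sub_distrib, ← Finset.sum_mul, hsumF, hsumP, mul_comm]
        rw [expand]
        calc |∑ x' ∈ F, massx D x' * (p x - p x')|
            ≤ ∑ x' ∈ F, |massx D x' * (p x - p x')| := Finset.abs_sum_le_sum_abs _ _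
          _ ≤ ∑ x' ∈ F, massx D x' * δ := by
              refine Finset.sum_le_sum fun x' hx' => ?_
              rw [abs_mul, abs_of_nonneg (massx_nonneg hD x')]
              refine mul_le_mul_of_nonneg_left ?_ (massx_nonneg hD x')
              exact hg _ _ (by rw [hxk, (Finset.mem_filter.1 hx').2])
          _ = δ * d := by rw [← Finset.sum_mul, hsumF, mul_comm]
      have : |p x - nP / d| ≤ δ := by
        rw [show p x - nP / d = (d * p x - nP) / d by field_simp, abs_div,
          abs_of_pos hd, div_le_iff₀ hd]
        nlinarith [key]
      exact mul_le_mul_of_nonneg_left this (massx_nonneg hD x)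
    calc ∑ x ∈ F, massx D x * |p x - nT / d|
        ≤ ∑ x ∈ F, (massx D x * |p x - nP / d| + massx D x * |nP / d - nT / d|) := by
          refine Finset.sum_le_sum fun x hx => ?_
          rw [← mul_add]
          refine mul_le_mul_of_nonneg_left ?_ (massx_nonneg hD x)
          calc |p x - nT / d| = |(p x - nP / d) + (nP / d - nT / d)| := by ring_nf
            _ ≤ _ := abs_add_le _ _
      _ = (∑ x ∈ F, massx D x * |p x - nP / d|) + (∑ x ∈ F, massx D x) * |nP / d - nT / d| := by
          rw [Finset.sum_add_distrib, Finset.sum_mul]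
      _ ≤ (∑ x ∈ F, massx D x * δ) + d * |nP / d - nT / d| := by
          rw [hsumF]
          exact add_le_add (Finset.sum_le_sum step1) le_rfl
      _ = δ * d + |nP - nT| := by
          rw [← Finset.sum_mul, hsumF, mul_comm]
          congr 1
          rw [div_sub_div_same, abs_div, abs_of_pos hd]
          field_simp
  
lemma sum_bden (hD : IsDistribution D) :
    ∑ k ∈ Finset.image (fun x => g (p x)) Finset.univ, bden D p g k = 1 := by
  classical
  have : ∀ k ∈ Finset.image (fun x => g (p x)) Finset.univ,
      bden D p g k = ∑ x ∈ Finset.univ.filter (fun x => g (p x) = k), massx D x :=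
    fun k _ => bden_filter k
  rw [Finset.sum_congr rfl this,
    Finset.sum_fiberwise_of_maps_to
      (fun x _ => Finset.mem_image_of_mem (fun x => g (p x)) (Finset.mem_univ x)),
    sum_massx_eq_one hD]

lemma distp_bq_le (hD : IsDistribution D) (hδ : 0 ≤ δ)
    (hg : ∀ t u : ℝ, g t = g u → |t - u| ≤ δ) :
    distp D p (bq D p g) ≤ δ + ∑ k ∈ Finset.image (fun x => g (p x)) Finset.univ,
      |bnumP D p g k - bnumT D p g k| := by
  classical
  have grp : distp D p (bq D p g)
      = ∑ k ∈ Finset.image (fun x => g (p x)) Finset.univ,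
          ∑ x ∈ Finset.univ.filter (fun x => g (p x) = k),
            massx D x * |p x - bnumT D p g k / bden D p g k| := by
    rw [distp, ← Finset.sum_fiberwise_of_maps_to
      (fun x _ => Finset.mem_image_of_mem (fun x => g (p x)) (Finset.mem_univ x))]
    refine Finset.sum_congr rfl fun k _ => Finset.sum_congr rfl fun x hx => ?_
    rw [(Finset.mem_filter.1 hx).2.symm]
    rfl
  rw [grp]
  calc _ ≤ ∑ k ∈ Finset.image (fun x => g (p x)) Finset.univ,
        (δ * bden D p g k + |bnumP D p g k - bnumT D p g k|) :=
        Finset.sum_le_sum fun k _ => bucket_dist_bound hD hδ hg k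
    _ = δ + ∑ k ∈ Finset.image (fun x => g (p x)) Finset.univ,
        |bnumP D p g k - bnumT D p g k| := by
        rw [Finset.sum_add_distrib, ← Finset.mul_sum, sum_bden hD, mul_one]

end DistBound
section Transfer

variable {X : Type} [Fintype X]

lemma sum_repr (D : X × Bool → ℝ) (p : X → ℝ) (F : ℝ → Bool → ℝ) (V : Finset ℝ)
    (hV : ∀ x : X, p x ∈ V) :
    ∑ z : X × Bool, D z * F (p z.1) z.2
      = ∑ b : Bool, ∑ v ∈ V, jointOf D p (v, b) * F v b := by
  classical
  have : ∀ b : Bool, ∀ x : X,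
      ∑ v ∈ V, (if p x = v then D (x, b) * F v b else 0) = D (x, b) * F (p x) b := by
    intro b x
    rw [Finset.sum_ite_eq V (p x) (fun v => D (x, b) * F v b)]
    simp [hV x]
  calc ∑ z : X × Bool, D z * F (p z.1) z.2
      = ∑ x : X, ∑ b : Bool, D (x, b) * F (p x) b := by rw [Fintype.sum_prod_type]
    _ = ∑ b : Bool, ∑ x : X, D (x, b) * F (p x) b := Finset.sum_comm
    _ = ∑ b : Bool, ∑ x : X, ∑ v ∈ V, (if p x = v then D (x, b) * F v b else 0) := by
        refine Finset.sum_congr rfl fun b _ => Finset.sum_congr rfl fun x _ => (this b x).symm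
    _ = ∑ b : Bool, ∑ v ∈ V, ∑ x : X, (if p x = v then D (x, b) * F v b else 0) := by
        refine Finset.sum_congr rfl fun b _ => Finset.sum_comm
    _ = ∑ b : Bool, ∑ v ∈ V, jointOf D p (v, b) * F v b := by
        refine Finset.sum_congr rfl fun b _ => Finset.sum_congr rfl fun v _ => ?_
        rw [jointOf, Finset.sum_mul]
        refine Finset.sum_congr rfl fun x _ => ?_
        by_cases h : p x = v <;> simp [h]

lemma transfer_sum {X2 : Type} [Fintype X2] (D1 : X × Bool → ℝ) (p1 : X → ℝ)
    (D2 : X2 × Bool → ℝ) (p2 : X2 → ℝ) (hJ : jointOf D1 p1 = jointOf D2 p2)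
    (F : ℝ → Bool → ℝ) :
    ∑ z : X × Bool, D1 z * F (p1 z.1) z.2 = ∑ z : X2 × Bool, D2 z * F (p2 z.1) z.2 := by
  classical
  set V : Finset ℝ := Finset.image p1 Finset.univ ∪ Finset.image p2 Finset.univ with hV
  rw [sum_repr D1 p1 F V (fun x => Finset.mem_union_left _
      (Finset.mem_image_of_mem p1 (Finset.mem_univ x))),
    sum_repr D2 p2 F V (fun x => Finset.mem_union_right _
      (Finset.mem_image_of_mem p2 (Finset.mem_univ x))), hJ]

/-- The signed bucket discrepancy as an expectation. -/
lemma bdiff_as_sum (D : X × Bool → ℝ) (r : X → ℝ) (g : ℝ → ℤ) (k : ℤ) :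
    bnumP D r g k - bnumT D r g k
      = ∑ z : X × Bool, D z * (if g (r z.1) = k then r z.1 - yval z.2 else 0) := by
  rw [sum_prod_bool]
  rw [bnumP, bnumT, ← Finset.sum_sub_distrib]
  refine Finset.sum_congr rfl fun x _ => ?_
  by_cases h : g (r x) = k <;> simp [h, yval, massx] <;> ring

lemma calib_zero (D : X × Bool → ℝ) (q : X → ℝ) (hq : PerfectlyCalibrated D q)
    (g : ℝ → ℤ) (k : ℤ) :
    ∑ z : X × Bool, D z * (if g (q z.1) = k then q z.1 - yval z.2 else 0) = 0 := by
  classical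
  rw [← bdiff_as_sum]
  have grp : ∀ f : X → ℝ,
      ∑ x : X, (if g (q x) = k then f x else 0)
        = ∑ v ∈ Finset.image q Finset.univ,
            (if g v = k then (∑ x : X, if q x = v then f x else 0) else 0) := by
    intro f
    have hfib := Finset.sum_fiberwise_of_maps_to (s := (Finset.univ : Finset X))
      (t := Finset.image q Finset.univ) (g := q)
      (fun x _ => Finset.mem_image_of_mem q (Finset.mem_univ x))
      (fun x => if g (q x) = k then f x else 0)
    rw [← hfib]
    refine Finset.sum_congr rfl fun v _ => ?_
    simp only [Finset.sum_filter]
    by_cases hk : g v = k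
    · simp only [hk, if_true]
      refine Finset.sum_congr rfl fun x _ => ?_
      by_cases hx : q x = v
      · simp [hx, hk]
      · simp [hx]
    · simp only [hk, if_false]
      refine Finset.sum_eq_zero fun x _ => ?_
      by_cases hx : q x = v
      · simp [hx, hk]
      · simp [hx]
  have h1 : bnumP D q g k = ∑ v ∈ Finset.image q Finset.univ,
      (if g v = k then (∑ x : X, if q x = v then massx D x * q x else 0) else 0) := grp _
  have h2 : bnumT D q g k = ∑ v ∈ Finset.image q Finset.univ,
      (if g v = k then (∑ x : X, if q x = v then D (x, true) else 0) else 0) := grp _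
  rw [h1, h2, ← Finset.sum_sub_distrib]
  refine Finset.sum_eq_zero fun v hv => ?_
  have hrange : v ∈ Set.range q := by
    rcases Finset.mem_image.1 hv with ⟨x, _, hx⟩
    exact ⟨x, hx⟩
  have hcal := hq v hrange
  by_cases h : g v = k
  · simp only [h, if_true]
    rw [hcal]
    have : (∑ x : X, if q x = v then massx D x * q x else 0)
        = v * ∑ x : X, if q x = v then massx D x else 0 := by
      rw [Finset.mul_sum]
      refine Finset.sum_congr rfl fun x _ => ?_
      by_cases hx : q x = v
      · simp [hx, mul_comm]
      · simp [hx]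
    rw [this]
    ring
  · simp [h]

end Transfer
section Discrepancy

/-- The pointwise bound used for the bucket discrepancy. -/
def Bk (g : ℝ → ℤ) (a c : ℝ) (k : ℤ) : ℝ :=
  (if g a = k then |a - c| else 0) +
    (if g a = g c then 0 else ((if g a = k then (1:ℝ) else 0) + (if g c = k then 1 else 0)))

lemma Bk_ptw (g : ℝ → ℤ) {a c y : ℝ} (ha : a ∈ Set.Icc (0:ℝ) 1) (hc : c ∈ Set.Icc (0:ℝ) 1)
    (hy : y = 0 ∨ y = 1) (k : ℤ) :
    |(if g a = k then a - y else 0) - (if g c = k then c - y else 0)| ≤ Bk g a c k := by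
  have hay : |a - y| ≤ 1 := by
    rcases hy with h | h <;> rw [h, abs_le] <;> constructor <;> nlinarith [ha.1, ha.2]
  have hcy : |c - y| ≤ 1 := by
    rcases hy with h | h <;> rw [h, abs_le] <;> constructor <;> nlinarith [hc.1, hc.2]
  have e : a - y - (c - y) = a - c := by ring
  unfold Bk
  split_ifs with h1 h2 h3 h4 h5 h6 h7 h8 <;>
    simp only [sub_zero, zero_sub, abs_neg, sub_self, abs_zero, e] <;>
    first
      | linarith [abs_nonneg (a - c)]
      | simp_all

lemma sum_Bk_le (g : ℝ → ℤ) (K : Finset ℤ) (a c : ℝ) :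
    ∑ k ∈ K, Bk g a c k ≤ |a - c| + (if g a = g c then 0 else 2) := by
  classical
  unfold Bk
  rw [Finset.sum_add_distrib]
  have h1 : ∑ k ∈ K, (if g a = k then |a - c| else 0) ≤ |a - c| := by
    rw [Finset.sum_ite_eq K (g a) (fun _ => |a - c|)]
    by_cases h : g a ∈ K <;> simp [h, abs_nonneg]
  have h2 : ∑ k ∈ K, (if g a = g c then 0 else ((if g a = k then (1:ℝ) else 0) + (if g c = k then 1 else 0)))
      ≤ (if g a = g c then 0 else 2) := by
    by_cases h : g a = g c
    · simp [h]
    · simp only [h, if_false]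
      rw [Finset.sum_add_distrib, Finset.sum_ite_eq K (g a) (fun _ => (1:ℝ)),
        Finset.sum_ite_eq K (g c) (fun _ => (1:ℝ))]
      by_cases h1 : g a ∈ K <;> by_cases h2 : g c ∈ K <;> simp [h1, h2] <;> norm_num
  linarith

lemma sum_bdiff_le {X1 X2 : Type} [Fintype X1] [Fintype X2]
    (D1 : X1 × Bool → ℝ) (p1 : X1 → ℝ)
    (D2 : X2 × Bool → ℝ) (p2 q2 : X2 → ℝ)
    (hD2 : IsDistribution D2) (hp2 : IsPredictor p2) (hq2p : IsPredictor q2)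
    (hq2 : PerfectlyCalibrated D2 q2) (hJ : jointOf D1 p1 = jointOf D2 p2)
    (g : ℝ → ℤ) (K : Finset ℤ) :
    ∑ k ∈ K, |bnumP D1 p1 g k - bnumT D1 p1 g k|
      ≤ distp D2 p2 q2
        + 2 * ∑ x : X2, massx D2 x * (if g (p2 x) = g (q2 x) then 0 else 1) := by
  classical
  have h1 : ∀ k : ℤ, bnumP D1 p1 g k - bnumT D1 p1 g k
      = ∑ z : X2 × Bool, D2 z *
          ((if g (p2 z.1) = k then p2 z.1 - yval z.2 else 0)
            - (if g (q2 z.1) = k then q2 z.1 - yval z.2 else 0)) := by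
    intro k
    rw [bdiff_as_sum, transfer_sum D1 p1 D2 p2 hJ (fun v b => if g v = k then v - yval b else 0)]
    rw [show (∑ z : X2 × Bool, D2 z * (if g (p2 z.1) = k then p2 z.1 - yval z.2 else 0))
        = (∑ z : X2 × Bool, D2 z * (if g (p2 z.1) = k then p2 z.1 - yval z.2 else 0))
          - ∑ z : X2 × Bool, D2 z * (if g (q2 z.1) = k then q2 z.1 - yval z.2 else 0) by
        rw [calib_zero D2 q2 hq2 g k]; ring]
    rw [← Finset.sum_sub_distrib]
    refine Finset.sum_congr rfl fun z _ => by ring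
  calc ∑ k ∈ K, |bnumP D1 p1 g k - bnumT D1 p1 g k|
      ≤ ∑ k ∈ K, ∑ z : X2 × Bool, D2 z * Bk g (p2 z.1) (q2 z.1) k := by
        refine Finset.sum_le_sum fun k _ => ?_
        rw [h1 k]
        calc |∑ z : X2 × Bool, D2 z * _| ≤ ∑ z : X2 × Bool, |D2 z * _| :=
              Finset.abs_sum_le_sum_abs _ _
          _ ≤ _ := by
              refine Finset.sum_le_sum fun z _ => ?_
              rw [abs_mul, abs_of_nonneg (hD2.1 z)]
              refine mul_le_mul_of_nonneg_left ?_ (hD2.1 z)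
              exact Bk_ptw g (hp2 z.1) (hq2p z.1)
                (by cases z.2 <;> simp [yval]) k
    _ = ∑ z : X2 × Bool, D2 z * ∑ k ∈ K, Bk g (p2 z.1) (q2 z.1) k := by
        rw [Finset.sum_comm]
        exact Finset.sum_congr rfl fun z _ => (Finset.mul_sum _ _ _).symm
    _ ≤ ∑ z : X2 × Bool, D2 z *
          (|p2 z.1 - q2 z.1| + (if g (p2 z.1) = g (q2 z.1) then 0 else 2)) := by
        refine Finset.sum_le_sum fun z _ => ?_
        exact mul_le_mul_of_nonneg_left (sum_Bk_le g K _ _) (hD2.1 z)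
    _ = distp D2 p2 q2
        + 2 * ∑ x : X2, massx D2 x * (if g (p2 x) = g (q2 x) then 0 else 1) := by
        rw [sum_prod_bool, distp, Finset.mul_sum, ← Finset.sum_add_distrib]
        refine Finset.sum_congr rfl fun x _ => ?_
        simp only [massx]
        by_cases h : g (p2 x) = g (q2 x) <;> simp [h] <;> ring

end Discrepancy
section Counting

/-- The shifted grid bucket function. -/
def gsh (δ s : ℝ) : ℝ → ℤ := fun t => ⌊(t - s) / δ⌋

lemma gsh_width {δ : ℝ} (hδ : 0 < δ) (s : ℝ) :
    ∀ t u : ℝ, gsh δ s t = gsh δ s u → |t - u| ≤ δ := by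
  intro t u h
  have := Int.abs_sub_lt_one_of_floor_eq_floor (R := ℝ) h
  rw [div_sub_div_same, abs_div, abs_of_pos hδ, div_lt_one hδ] at this
  have : |t - s - (u - s)| ≤ δ := le_of_lt this
  rwa [show t - s - (u - s) = t - u by ring] at this

lemma counting_le {δ : ℝ} (hδ : 0 < δ) {N : ℕ} (hN : 0 < N) {a b : ℝ} (hab : a ≤ b) :
    ∑ j ∈ Finset.range N,
        (if gsh δ ((j : ℝ) * δ / N) a = gsh δ ((j : ℝ) * δ / N) b then (0:ℝ) else 1)
      ≤ (N : ℝ) * (b - a) / δ + 1 := by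
  classical
  set c : ℕ → Prop := fun j => gsh δ ((j : ℝ) * δ / N) a = gsh δ ((j : ℝ) * δ / N) b with hc
  have hsum : ∑ j ∈ Finset.range N, (if c j then (0:ℝ) else 1)
      = ((Finset.range N).filter (fun j => ¬ c j)).card := by
    rw [Finset.sum_ite, Finset.sum_const, Finset.sum_const]
    simp
  rw [hsum]
  set S := (Finset.range N).filter (fun j => ¬ c j) with hS
  -- the injection into the integer interval
  have hcard : S.card ≤ (Finset.Ioc ⌊(N : ℝ) * a / δ⌋ ⌊(N : ℝ) * b / δ⌋).card := by
    refine Finset.card_le_card_of_injOn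
      (fun j => (j : ℤ) + (N : ℤ) * ⌊(b - (j : ℝ) * δ / N) / δ⌋) ?_ ?_
    · intro j hj
      rw [hS, Finset.mem_coe, Finset.mem_filter, Finset.mem_range] at hj
      obtain ⟨hjN, hne⟩ := hj
      set s : ℝ := (j : ℝ) * δ / N with hs
      set k : ℤ := ⌊(b - s) / δ⌋ with hk
      have hmono : ⌊(a - s) / δ⌋ ≤ k :=
        Int.floor_le_floor ((div_le_div_iff_of_pos_right hδ).2 (by linarith))
      have hlt : ⌊(a - s) / δ⌋ < k := lt_of_le_of_ne hmono (by exact hne)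
      have hNpos : (0:ℝ) < N := by exact_mod_cast hN
      have hNne : (N:ℝ) ≠ 0 := ne_of_gt hNpos
      have hδne : δ ≠ 0 := ne_of_gt hδ
      rw [Finset.mem_coe, Finset.mem_Ioc]
      constructor
      · rw [Int.floor_lt]
        push_cast
        have h1 : (a - s) / δ < k := by
          calc (a - s)/δ < ⌊(a - s) / δ⌋ + 1 := Int.lt_floor_add_one _
            _ ≤ k := by exact_mod_cast hlt
        have h2 : (N : ℝ) * ((a - s)/δ) < N * k := by
          exact (mul_lt_mul_iff_right₀ hNpos).2 h1
        have : (N : ℝ) * a / δ = N * ((a - s)/δ) + j := by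
          rw [hs]; field_simp; ring
        rw [this]
        linarith
      · rw [Int.le_floor]
        push_cast
        have h1 : (k : ℝ) ≤ (b - s)/δ := Int.floor_le _
        have h2 : (N : ℝ) * k ≤ N * ((b - s)/δ) := by
          exact (mul_le_mul_iff_right₀ hNpos).2 h1
        have : (N : ℝ) * b / δ = N * ((b - s)/δ) + j := by
          rw [hs]; field_simp; ring
        rw [this]
        linarith
    · intro j1 hj1 j2 hj2 heq
      rw [hS, Finset.mem_coe, Finset.mem_filter, Finset.mem_range] at hj1 hj2
      set K1 : ℤ := ⌊(b - (j1 : ℝ) * δ / N) / δ⌋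
      set K2 : ℤ := ⌊(b - (j2 : ℝ) * δ / N) / δ⌋
      have heq' : (j1 : ℤ) + (N : ℤ) * K1 = (j2 : ℤ) + (N : ℤ) * K2 := heq
      have h : (j1 : ℤ) - j2 = (N : ℤ) * (K2 - K1) := by ring_nf; ring_nf at heq'; omega
      by_cases hK : K2 - K1 = 0
      · have : (j1 : ℤ) = j2 := by rw [hK, mul_zero] at h; omega
        exact_mod_cast this
      · exfalso
        have h1 : |(j1 : ℤ) - j2| < N := by
          rw [abs_lt]; constructor <;> [omega; omega]
        have h2 : (N : ℤ) ≤ |(N : ℤ) * (K2 - K1)| := by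
          rw [abs_mul, abs_of_nonneg (by positivity : (0:ℤ) ≤ (N:ℤ))]
          have : 1 ≤ |K2 - K1| := Int.one_le_abs hK
          nlinarith
        rw [h] at h1
        omega
  have hIoc : ((Finset.Ioc ⌊(N : ℝ) * a / δ⌋ ⌊(N : ℝ) * b / δ⌋).card : ℝ)
      ≤ (N : ℝ) * (b - a) / δ + 1 := by
    rw [Int.card_Ioc]
    have hfl : ⌊(N : ℝ) * a / δ⌋ ≤ ⌊(N : ℝ) * b / δ⌋ := by
      refine Int.floor_le_floor ((div_le_div_iff_of_pos_right hδ).2 ?_)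
      have : (0:ℝ) ≤ (N:ℝ) := by positivity
      nlinarith
    have hx : (0:ℤ) ≤ ⌊(N : ℝ) * b / δ⌋ - ⌊(N : ℝ) * a / δ⌋ := by omega
    have hcast : (((⌊(N : ℝ) * b / δ⌋ - ⌊(N : ℝ) * a / δ⌋).toNat : ℕ) : ℝ)
        = ((⌊(N : ℝ) * b / δ⌋ : ℝ) - (⌊(N : ℝ) * a / δ⌋ : ℝ)) := by
      exact_mod_cast congrArg (Int.cast : ℤ → ℝ) (Int.toNat_of_nonneg hx)
    rw [hcast]
    have h1 : ((⌊(N : ℝ) * b / δ⌋ : ℝ)) ≤ (N : ℝ) * b / δ := Int.floor_le _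
    have h2 : (N : ℝ) * a / δ - 1 < ⌊(N : ℝ) * a / δ⌋ := Int.sub_one_lt_floor _
    have : (N : ℝ) * (b - a) / δ = (N : ℝ) * b / δ - (N : ℝ) * a / δ := by ring
    rw [this]
    linarith
  calc (S.card : ℝ) ≤ ((Finset.Ioc ⌊(N : ℝ) * a / δ⌋ ⌊(N : ℝ) * b / δ⌋).card : ℝ) := by
        exact_mod_cast hcard
    _ ≤ _ := hIoc

lemma counting_le' {δ : ℝ} (hδ : 0 < δ) {N : ℕ} (hN : 0 < N) (a b : ℝ) :
    ∑ j ∈ Finset.range N,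
        (if gsh δ ((j : ℝ) * δ / N) a = gsh δ ((j : ℝ) * δ / N) b then (0:ℝ) else 1)
      ≤ (N : ℝ) * |a - b| / δ + 1 := by
  rcases le_total a b with h | h
  · rw [abs_of_nonpos (by linarith), neg_sub]
    exact counting_le hδ hN h
  · rw [abs_of_nonneg (by linarith)]
    have := counting_le hδ hN h
    calc ∑ j ∈ Finset.range N,
          (if gsh δ ((j : ℝ) * δ / N) a = gsh δ ((j : ℝ) * δ / N) b then (0:ℝ) else 1)
        = ∑ j ∈ Finset.range N,
          (if gsh δ ((j : ℝ) * δ / N) b = gsh δ ((j : ℝ) * δ / N) a then (0:ℝ) else 1) := by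
          exact Finset.sum_congr rfl fun j _ => if_congr eq_comm rfl rfl
      _ ≤ _ := this

end Counting
section DCEFacts

variable {X : Type} [Fintype X]

lemma distp_nonneg {D : X × Bool → ℝ} (hD : IsDistribution D) (p q : X → ℝ) :
    0 ≤ distp D p q :=
  Finset.sum_nonneg fun x _ => mul_nonneg (massx_nonneg hD x) (abs_nonneg _)

lemma dCE_set_bddBelow {D : X × Bool → ℝ} (hD : IsDistribution D) (p : X → ℝ) :
    BddBelow {c : ℝ | ∃ q : X → ℝ, IsPredictor q ∧ PerfectlyCalibrated D q ∧ c = distp D p q} :=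
  ⟨0, fun c hc => by obtain ⟨q, _, _, rfl⟩ := hc; exact distp_nonneg hD p q⟩

lemma dCE_le_distp {D : X × Bool → ℝ} (hD : IsDistribution D) (p q : X → ℝ)
    (hq : IsPredictor q) (hqc : PerfectlyCalibrated D q) :
    dCE D p ≤ distp D p q :=
  csInf_le (dCE_set_bddBelow hD p) ⟨q, hq, hqc, rfl⟩

lemma const_calibrated {D : X × Bool → ℝ} (hD : IsDistribution D) :
    IsPredictor (fun _ : X => ∑ x : X, D (x, true)) ∧
      PerfectlyCalibrated D (fun _ : X => ∑ x : X, D (x, true)) := by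
  constructor
  · intro x
    constructor
    · exact Finset.sum_nonneg fun x _ => hD.1 _
    · calc ∑ x : X, D (x, true) ≤ ∑ x : X, massx D x :=
            Finset.sum_le_sum fun x _ => by
              simp [massx, le_add_of_nonneg_left, hD.1 (x, false)]
        _ = 1 := sum_massx_eq_one hD
  · intro v hv
    obtain ⟨x0, hx0⟩ := hv
    simp only at hx0
    subst hx0
    simp only [if_true]
    rw [sum_massx_eq_one hD, mul_one]

lemma dCE_set_nonempty {D : X × Bool → ℝ} (hD : IsDistribution D) (p : X → ℝ) :
    {c : ℝ | ∃ q : X → ℝ, IsPredictor q ∧ PerfectlyCalibrated D q ∧ c = distp D p q}.Nonempty :=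
  ⟨_, ⟨_, (const_calibrated hD).1, (const_calibrated hD).2, rfl⟩⟩

lemma dCE_nonneg {D : X × Bool → ℝ} (hD : IsDistribution D) (p : X → ℝ) :
    0 ≤ dCE D p :=
  le_csInf (dCE_set_nonempty hD p) fun c hc => by
    obtain ⟨q, _, _, rfl⟩ := hc; exact distp_nonneg hD p q

lemma dCE_le_one {D : X × Bool → ℝ} (hD : IsDistribution D) (p : X → ℝ)
    (hp : IsPredictor p) : dCE D p ≤ 1 := by
  refine le_trans (dCE_le_distp hD p _ (const_calibrated hD).1 (const_calibrated hD).2) ?_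
  calc distp D p (fun _ : X => ∑ x : X, D (x, true))
      ≤ ∑ x : X, massx D x * 1 := by
        refine Finset.sum_le_sum fun x _ => ?_
        refine mul_le_mul_of_nonneg_left ?_ (massx_nonneg hD x)
        rw [abs_le]
        have h1 := (hp x).1
        have h2 := (hp x).2
        have h3 : 0 ≤ ∑ x : X, D (x, true) := Finset.sum_nonneg fun x _ => hD.1 _
        have h4 : (∑ x : X, D (x, true)) ≤ 1 := ((const_calibrated hD).1 x).2
        constructor <;> simp only [] <;> nlinarith
    _ = 1 := by simp [sum_massx_eq_one hD]

end DCEFacts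

section Core

lemma core_bound {X1 X2 : Type} [Fintype X1] [Fintype X2]
    (D1 : X1 × Bool → ℝ) (p1 : X1 → ℝ) (hD1 : IsDistribution D1)
    (D2 : X2 × Bool → ℝ) (p2 q2 : X2 → ℝ)
    (hD2 : IsDistribution D2) (hp2 : IsPredictor p2) (hq2p : IsPredictor q2)
    (hq2 : PerfectlyCalibrated D2 q2) (hJ : jointOf D1 p1 = jointOf D2 p2)
    {δ : ℝ} (hδ : 0 < δ) {N : ℕ} (hN : 0 < N) :
    dCE D1 p1 ≤ δ + distp D2 p2 q2 * (1 + 2 / δ) + 2 / N := by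
  classical
  set ε := distp D2 p2 q2 with hε
  set g : ℕ → ℝ → ℤ := fun j => gsh δ ((j : ℝ) * δ / N) with hg
  set Φ : ℕ → ℝ := fun j => ∑ k ∈ Finset.image (fun x => g j (p1 x)) Finset.univ,
      |bnumP D1 p1 (g j) k - bnumT D1 p1 (g j) k| with hΦ
  set I : ℕ → ℝ := fun j => ∑ x : X2, massx D2 x *
      (if g j (p2 x) = g j (q2 x) then (0:ℝ) else 1) with hI
  have hdce : ∀ j : ℕ, dCE D1 p1 ≤ δ + Φ j := by
    intro j
    calc dCE D1 p1 ≤ distp D1 p1 (bq D1 p1 (g j)) :=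
          dCE_le_distp hD1 p1 _ (bq_predictor hD1) (bq_calibrated hD1)
      _ ≤ δ + Φ j := distp_bq_le hD1 hδ.le (gsh_width hδ _)
  have hΦI : ∀ j : ℕ, Φ j ≤ ε + 2 * I j := fun j =>
    sum_bdiff_le D1 p1 D2 p2 q2 hD2 hp2 hq2p hq2 hJ (g j) _
  have hIsum : ∑ j ∈ Finset.range N, I j ≤ (N : ℝ) / δ * ε + 1 := by
    have swap : ∑ j ∈ Finset.range N, I j
        = ∑ x : X2, massx D2 x * ∑ j ∈ Finset.range N,
            (if g j (p2 x) = g j (q2 x) then (0:ℝ) else 1) := by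
      rw [Finset.sum_comm]
      exact Finset.sum_congr rfl fun x _ => (Finset.mul_sum _ _ _).symm
    rw [swap]
    calc ∑ x : X2, massx D2 x * ∑ j ∈ Finset.range N,
            (if g j (p2 x) = g j (q2 x) then (0:ℝ) else 1)
        ≤ ∑ x : X2, massx D2 x * ((N : ℝ) * |p2 x - q2 x| / δ + 1) := by
          refine Finset.sum_le_sum fun x _ => ?_
          exact mul_le_mul_of_nonneg_left (counting_le' hδ hN _ _) (massx_nonneg hD2 x)
      _ = ∑ x : X2, ((N : ℝ) / δ * (massx D2 x * |p2 x - q2 x|) + massx D2 x) :=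
          Finset.sum_congr rfl fun x _ => by ring
      _ = (N : ℝ) / δ * (∑ x : X2, massx D2 x * |p2 x - q2 x|) + ∑ x : X2, massx D2 x := by
          rw [Finset.sum_add_distrib, Finset.mul_sum]
      _ = (N : ℝ) / δ * ε + 1 := by rw [sum_massx_eq_one hD2, hε, distp]
  have hpig : ∃ j ∈ Finset.range N, ε + 2 * I j ≤ ε * (1 + 2 / δ) + 2 / N := by
    refine Finset.exists_le_of_sum_le ⟨0, Finset.mem_range.2 hN⟩ ?_
    have hNpos : (0:ℝ) < N := by exact_mod_cast hN
    calc ∑ j ∈ Finset.range N, (ε + 2 * I j)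
        = (N : ℝ) * ε + 2 * ∑ j ∈ Finset.range N, I j := by
          rw [Finset.sum_add_distrib, Finset.sum_const, Finset.card_range, ← Finset.mul_sum]
          push_cast
          ring
      _ ≤ (N : ℝ) * ε + 2 * ((N : ℝ) / δ * ε + 1) := by linarith [hIsum]
      _ = ∑ _j ∈ Finset.range N, (ε * (1 + 2 / δ) + 2 / N) := by
          rw [Finset.sum_const, Finset.card_range, nsmul_eq_mul]
          field_simp
          ring
  obtain ⟨j, _, hj⟩ := hpig
  calc dCE D1 p1 ≤ δ + Φ j := hdce j
    _ ≤ δ + (ε + 2 * I j) := by linarith [hΦI j]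
    _ ≤ δ + ε * (1 + 2 / δ) + 2 / N := by linarith [hj]

end Core
section Final

lemma sqrt_add_le' {x y : ℝ} (hx : 0 ≤ x) (hy : 0 ≤ y) :
    Real.sqrt (x + y) ≤ Real.sqrt x + Real.sqrt y := by
  have h : x + y ≤ (Real.sqrt x + Real.sqrt y)^2 := by
    nlinarith [Real.sq_sqrt hx, Real.sq_sqrt hy, Real.sqrt_nonneg x, Real.sqrt_nonneg y,
      mul_nonneg (Real.sqrt_nonneg x) (Real.sqrt_nonneg y)]
  calc Real.sqrt (x + y) ≤ Real.sqrt ((Real.sqrt x + Real.sqrt y)^2) := Real.sqrt_le_sqrt h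
    _ = Real.sqrt x + Real.sqrt y := Real.sqrt_sq (by positivity)

lemma limitN {a b : ℝ} (h : ∀ N : ℕ, 0 < N → a ≤ b + 2 / N) : a ≤ b := by
  by_contra hab
  push_neg at hab
  obtain ⟨N, hN⟩ := exists_nat_gt (2 / (a - b))
  have hd : 0 < a - b := by linarith
  have h2 : 0 < 2 / (a - b) := by positivity
  have hN0 : 0 < N := by
    by_contra h0
    push_neg at h0
    interval_cases N
    · simp at hN; linarith
  have hNpos : (0:ℝ) < N := by exact_mod_cast hN0
  have : 2 / (N : ℝ) < a - b := by
    rw [div_lt_iff₀ hNpos]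
    rw [div_lt_iff₀ hd] at hN
    linarith [hN]
  have := h N hN0
  linarith

lemma realization_dce_key {X : Type} [Fintype X] (D : X × Bool → ℝ) (hD : IsDistribution D)
    (p : X → ℝ) (hp : IsPredictor p) (R : Realization (jointOf D p)) {ε : ℝ}
    (hε0 : 0 < ε)
    (hex : ∃ R2 : Realization (jointOf D p), R2.dce < ε) :
    R.dce ≤ ε + 2 * Real.sqrt (2 * ε) := by
  classical
  obtain ⟨R2, hc⟩ := hex
  letI := R2.inst
  have hne2 := dCE_set_nonempty R2.hD' R2.p'
  have hlow : dCE R2.D' R2.p' < ε := hc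
  obtain ⟨e, ⟨q2, hq2p, hq2c, rfl⟩, he⟩ := exists_lt_of_csInf_lt hne2 hlow
  set δ := Real.sqrt (2 * ε) with hδdef
  have hδ : 0 < δ := Real.sqrt_pos.2 (by linarith)
  have hδsq : δ^2 = 2 * ε := Real.sq_sqrt (by linarith)
  have hδne : δ ≠ 0 := ne_of_gt hδ
  have hNall : ∀ N : ℕ, 0 < N → R.dce ≤ (δ + ε * (1 + 2/δ)) + 2 / N := by
    intro N hN
    letI := R.inst
    have hJ : jointOf R.D' R.p' = jointOf R2.D' R2.p' := R.hJ.trans R2.hJ.symm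
    have hcore := core_bound R.D' R.p' R.hD' R2.D' R2.p' q2 R2.hD' R2.hp' hq2p hq2c hJ hδ hN
    have hpos : (0:ℝ) ≤ 1 + 2/δ := by positivity
    have hmul : distp R2.D' R2.p' q2 * (1 + 2/δ) ≤ ε * (1 + 2/δ) :=
      mul_le_mul_of_nonneg_right (le_of_lt he) hpos
    calc R.dce ≤ δ + distp R2.D' R2.p' q2 * (1 + 2/δ) + 2 / N := hcore
      _ ≤ (δ + ε * (1 + 2/δ)) + 2 / N := by linarith
  have h2 : R.dce ≤ δ + ε * (1 + 2/δ) := limitN hNall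
  have h3 : ε * (2/δ) = δ := by
    field_simp
    nlinarith [hδsq]
  calc R.dce ≤ δ + ε * (1 + 2/δ) := h2
    _ = ε + (ε * (2/δ) + δ) := by ring
    _ = ε + 2 * δ := by rw [h3]; ring

end Final
/-- the upper distance to calibration is at most `4·sqrt` of the lower
distance to calibration: every realization `(X', D', p')` of `J*` satisfies
`dCE(p', D') ≤ 4·sqrt(dCE_lower(J*))`, and hence
`dCE_upper(J*) ≤ 4·sqrt(dCE_lower(J*))`. -/
theorem upper_dCE_le_sqrt_lower_dCE
    {X : Type} [Fintype X] (D : X × Bool → ℝ) (hD : IsDistribution D)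
    (p : X → ℝ) (hp : IsPredictor p) :
    (∀ R : Realization (jointOf D p),
        R.dce ≤ 4 * Real.sqrt
          (sInf {c : ℝ | ∃ R' : Realization (jointOf D p), c = R'.dce})) ∧
      sSup {c : ℝ | ∃ R : Realization (jointOf D p), c = R.dce} ≤
        4 * Real.sqrt (sInf {c : ℝ | ∃ R : Realization (jointOf D p), c = R.dce}) := by
  classical
  set S := {c : ℝ | ∃ R : Realization (jointOf D p), c = R.dce} with hSdef
  set L := sInf S with hLdef
  let R0 : Realization (jointOf D p) := ⟨X, D, p, hD, hp, rfl⟩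
  have hS : S.Nonempty := ⟨R0.dce, R0, rfl⟩
  have hSnn : ∀ c ∈ S, (0:ℝ) ≤ c := by
    rintro c ⟨R', rfl⟩
    letI := R'.inst
    exact dCE_nonneg R'.hD' R'.p'
  have hL0 : 0 ≤ L := le_csInf hS hSnn
  have hbdd : BddBelow S := ⟨0, fun c hc => hSnn c hc⟩
  have hL1 : L ≤ 1 := by
    refine le_trans (csInf_le hbdd ⟨R0, rfl⟩) ?_
    show R0.dce ≤ 1
    exact dCE_le_one hD p hp
  have key : ∀ R : Realization (jointOf D p), ∀ ε : ℝ, L < ε →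
      R.dce ≤ ε + 2 * Real.sqrt (2 * ε) := by
    intro R ε hε
    have hε0 : 0 < ε := lt_of_le_of_lt hL0 hε
    obtain ⟨c, hcS, hclt⟩ := exists_lt_of_csInf_lt hS hε
    obtain ⟨R2, rfl⟩ := hcS
    exact realization_dce_key D hD p hp R hε0 ⟨R2, hclt⟩
  have final : ∀ R : Realization (jointOf D p), R.dce ≤ 4 * Real.sqrt L := by
    intro R
    refine le_of_forall_pos_le_add fun η hη => ?_
    set γ := min (η/2) ((η/6)^2) with hγdef
    have hγ0 : 0 < γ := lt_min (by linarith) (by positivity)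
    have hγη2 : γ ≤ η/2 := min_le_left _ _
    have hkey := key R (L + γ) (by linarith)
    have hsγ : Real.sqrt γ ≤ η/6 := by
      rw [show η/6 = Real.sqrt ((η/6)^2) from (Real.sqrt_sq (by linarith)).symm]
      exact Real.sqrt_le_sqrt (min_le_right _ _)
    have hsplit : Real.sqrt (2*(L+γ)) ≤ Real.sqrt 2 * Real.sqrt L + Real.sqrt 2 * Real.sqrt γ := by
      calc Real.sqrt (2*(L+γ)) = Real.sqrt (2*L + 2*γ) := by ring_nf
        _ ≤ Real.sqrt (2*L) + Real.sqrt (2*γ) :=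
            sqrt_add_le' (by linarith) (by linarith)
        _ = Real.sqrt 2 * Real.sqrt L + Real.sqrt 2 * Real.sqrt γ := by
            rw [Real.sqrt_mul (by norm_num), Real.sqrt_mul (by norm_num)]
    have hs2 : Real.sqrt 2 ≤ 3/2 := by
      nlinarith [Real.sq_sqrt (show (0:ℝ) ≤ 2 by norm_num), Real.sqrt_nonneg 2]
    have hsL1 : Real.sqrt L ≤ 1 := Real.sqrt_le_one.mpr hL1
    have hLs : L ≤ Real.sqrt L := by
      nlinarith [Real.sq_sqrt hL0, Real.sqrt_nonneg L]
    have haux1 : Real.sqrt 2 * Real.sqrt γ ≤ (3/2) * Real.sqrt γ :=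
      mul_le_mul_of_nonneg_right hs2 (Real.sqrt_nonneg γ)
    have haux2 : Real.sqrt 2 * Real.sqrt L ≤ (3/2) * Real.sqrt L :=
      mul_le_mul_of_nonneg_right hs2 (Real.sqrt_nonneg L)
    have hsγ6 : Real.sqrt γ ≥ 0 := Real.sqrt_nonneg γ
    calc R.dce ≤ (L + γ) + 2 * Real.sqrt (2*(L+γ)) := hkey
      _ ≤ (L + γ) + 2 * (Real.sqrt 2 * Real.sqrt L + Real.sqrt 2 * Real.sqrt γ) := by
          linarith
      _ ≤ Real.sqrt L + γ + 3 * Real.sqrt L + 3 * Real.sqrt γ := by linarith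
      _ ≤ 4 * Real.sqrt L + (η/2 + 3 * (η/6)) := by linarith
      _ = 4 * Real.sqrt L + η := by ring
  exact ⟨final, csSup_le hS (by rintro c ⟨R, rfl⟩; exact final R)⟩
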